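/- Let (X, d) be a metric space, x₀ ∈ X, and suppose for every r > 0 the closed ball B̄_r(x₀) is compact and that there exists a norm F on ℝ^n and constant K with a surjection π : ℝ^n → X satisfying |d(π(v), π(w)) - F(v - w)| ≤ K for all v, w ∈ ℝ^n. Then for any two sequences of scales r_j → ∞ and s_j → ∞, the pointed Gromov–Hausdorff limits of (X, d/r_j, x₀) and (X, d/s_j, x₀) coincide (both equal (ℝ^n, d_F, 0) with d_F(x,y) = F(x - y)); i.e., the tangent cone at infinity is unique. -/

import Mathlib

open Filter

/-- `ApproxIsometryBalls d1 x d2 y R ε`: there is an ε-isometry between the closed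
R-balls of the pointed pseudometric spaces `(α, d1, x)` and `(β, d2, y)`. -/
def ApproxIsometryBalls {α β : Type*} (d1 : α → α → ℝ) (x : α)
    (d2 : β → β → ℝ) (y : β) (R ε : ℝ) : Prop :=
  ∃ f : α → β, f x = y ∧
    (∀ a b, d1 x a ≤ R → d1 x b ≤ R → |d1 a b - d2 (f a) (f b)| ≤ ε) ∧
    (∀ b, d2 y b ≤ R → ∃ a, d1 x a ≤ R ∧ d2 (f a) b ≤ ε)

/-- Pointed Gromov–Hausdorff convergence of a sequence of pseudometrics `d j` with
basepoint `x` to `(β, dlim, y)`: for every radius and tolerance, eventually the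
closed balls admit ε-isometries. -/
def PGHTendsto {α β : Type*} (d : ℕ → α → α → ℝ) (x : α)
    (dlim : β → β → ℝ) (y : β) : Prop :=
  ∀ R > 0, ∀ ε > 0, ∀ᶠ j in atTop, ApproxIsometryBalls (d j) x dlim y R ε

/-- Uniqueness of the tangent cone at infinity under uniform norm-comparability:
if a metric space X is norm-comparable to (ℝ^n, F) via a surjection π with
additive error K, then for any two sequences of scales r_j, s_j → ∞ the rescaled
pointed spaces (X, d/r_j, x₀) and (X, d/s_j, x₀) both converge in the pointed
Gromov–Hausdorff sense to (ℝ^n, d_F, 0); i.e. the tangent cone at infinity is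
unique and equals (ℝ^n, F). -/
lemma aux_pgh (n : ℕ) {X : Type*} [MetricSpace X] (x₀ : X)
    (F : (Fin n → ℝ) → ℝ)
    (hF0 : ∀ x, F x = 0 ↔ x = 0) (hFs : ∀ (a : ℝ) x, F (a • x) = |a| * F x)
    (hFa : ∀ x y, F (x + y) ≤ F x + F y)
    (K : ℝ) (hK : 0 ≤ K)
    (π : (Fin n → ℝ) → X) (hsurj : Function.Surjective π)
    (hcomp : ∀ v w, |dist (π v) (π w) - F (v - w)| ≤ K)
    (r : ℕ → ℝ) (hrpos : ∀ j, 0 < r j) (hr : Tendsto r atTop atTop) :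
    PGHTendsto (fun j a b => dist a b / r j) x₀ (fun v w => F (v - w)) (0 : Fin n → ℝ) := by
  intro R hR ε hε
  have hneg : ∀ x, F (-x) = F x := fun x => by simpa using hFs (-1) x
  have hF0' : F 0 = 0 := (hF0 0).mpr rfl
  have hFnn : ∀ x, 0 ≤ F x := by
    intro x
    have h := hFa x (-x)
    rw [add_neg_cancel, hF0', hneg] at h
    linarith
  set σ : X → (Fin n → ℝ) := fun a => (hsurj a).choose with hσdef
  have hσ : ∀ a, π (σ a) = a := fun a => (hsurj a).choose_spec
  filter_upwards [hr.eventually_ge_atTop (max (2 * K / ε + 1) (K / R + 1))] with j hj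
  have hrj := hrpos j
  have hne := hrj.ne'
  have hj1 : 2 * K / ε + 1 ≤ r j := le_trans (le_max_left _ _) hj
  have hj2 : K / R + 1 ≤ r j := le_trans (le_max_right _ _) hj
  have h2K : 2 * K ≤ ε * r j := by
    have h : 2 * K / ε ≤ r j := by linarith
    rw [div_le_iff₀ hε] at h; linarith [mul_comm (r j) ε]
  have hKR : K < R * r j := by
    have h : K / R < r j := by linarith
    rw [div_lt_iff₀ hR] at h; linarith [mul_comm (r j) R]
  have hRr : 0 < R * r j := mul_pos hR hrj
  refine ⟨fun a => (r j)⁻¹ • (σ a - σ x₀), by simp, ?_, ?_⟩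
  · intro a b _ _
    dsimp only
    have heq : (r j)⁻¹ • (σ a - σ x₀) - (r j)⁻¹ • (σ b - σ x₀)
        = (r j)⁻¹ • (σ a - σ b) := by module
    rw [heq, hFs, abs_of_pos (inv_pos.mpr hrj)]
    have hc := hcomp (σ a) (σ b)
    rw [hσ, hσ] at hc
    rw [div_eq_inv_mul, ← mul_sub, abs_mul, abs_of_pos (inv_pos.mpr hrj)]
    have hKe : (r j)⁻¹ * K ≤ ε := by
      rw [inv_mul_le_iff₀ hrj]; nlinarith
    calc (r j)⁻¹ * |dist a b - F (σ a - σ b)| ≤ (r j)⁻¹ * K := by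
          exact mul_le_mul_of_nonneg_left hc (inv_pos.mpr hrj).le
      _ ≤ ε := hKe
  · intro b hb
    dsimp only at hb ⊢
    rw [zero_sub, hneg] at hb
    set t : ℝ := (R * r j - K) / (R * r j) with htdef
    have ht0 : 0 ≤ t := div_nonneg (by linarith) hRr.le
    have ht1 : t ≤ 1 := by rw [div_le_one hRr]; linarith
    set c : Fin n → ℝ := t • b with hcdef
    refine ⟨π (r j • c + σ x₀), ?_, ?_⟩
    · -- dist bound
      have hA := hcomp (σ x₀) (r j • c + σ x₀)
      rw [hσ] at hA
      have key1 : F (σ x₀ - (r j • c + σ x₀)) = r j * F c := by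
        have h : σ x₀ - (r j • c + σ x₀) = (-(r j)) • c := by module
        rw [h, hFs, abs_neg, abs_of_pos hrj]
      have hFc : F c ≤ t * R := by
        calc F c = t * F b := by rw [hcdef, hFs, abs_of_nonneg ht0]
          _ ≤ t * R := mul_le_mul_of_nonneg_left hb ht0
      have htR : t * R * r j = R * r j - K := by
        rw [htdef]; field_simp
      have hd : dist x₀ (π (r j • c + σ x₀)) ≤ R * r j := by
        have h := (abs_le.mp hA).2
        rw [key1] at h
        nlinarith
      rw [div_le_iff₀ hrj]; linarith [mul_comm R (r j)]
    · -- approximation bound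
      set a : X := π (r j • c + σ x₀) with hadef
      have hB := hcomp (σ a) (r j • c + σ x₀)
      rw [hσ, ← hadef, dist_self, zero_sub, abs_neg, abs_of_nonneg (hFnn _)] at hB
      have hsplit : (r j)⁻¹ • (σ a - σ x₀) - b
          = (r j)⁻¹ • (σ a - (r j • c + σ x₀)) + (c - b) := by
        simp only [smul_sub, smul_add, smul_smul, inv_mul_cancel₀ hne, one_smul]
        abel
      have h1 : F ((r j)⁻¹ • (σ a - (r j • c + σ x₀))) ≤ (r j)⁻¹ * K := by
        rw [hFs, abs_of_pos (inv_pos.mpr hrj)]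
        exact mul_le_mul_of_nonneg_left hB (inv_pos.mpr hrj).le
      have hcb : F (c - b) ≤ K / r j := by
        have h : c - b = (t - 1) • b := by rw [hcdef, sub_smul, one_smul]
        rw [h, hFs, abs_of_nonpos (by linarith : t - 1 ≤ 0)]
        have h1t : -(t - 1) = K / (R * r j) := by rw [htdef]; field_simp; ring
        rw [h1t]
        calc K / (R * r j) * F b ≤ K / (R * r j) * R :=
              mul_le_mul_of_nonneg_left hb (div_nonneg hK hRr.le)
          _ = K / r j := by field_simp
      calc F ((r j)⁻¹ • (σ a - σ x₀) - b)
          ≤ F ((r j)⁻¹ • (σ a - (r j • c + σ x₀))) + F (c - b) := by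
            rw [hsplit]; exact hFa _ _
        _ ≤ (r j)⁻¹ * K + K / r j := add_le_add h1 hcb
        _ = 2 * K / r j := by field_simp; ring
        _ ≤ ε := by rw [div_le_iff₀ hrj]; linarith [mul_comm ε (r j)]

theorem stmt19 (n : ℕ) {X : Type*} [MetricSpace X] (x₀ : X)
    (hproper : ∀ r : ℝ, 0 < r → IsCompact (Metric.closedBall x₀ r))
    (F : (Fin n → ℝ) → ℝ)
    (hF0 : ∀ x, F x = 0 ↔ x = 0) (hFs : ∀ (a : ℝ) x, F (a • x) = |a| * F x)
    (hFa : ∀ x y, F (x + y) ≤ F x + F y)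
    (K : ℝ) (hK : 0 ≤ K)
    (π : (Fin n → ℝ) → X) (hsurj : Function.Surjective π)
    (hcomp : ∀ v w, |dist (π v) (π w) - F (v - w)| ≤ K)
    (r s : ℕ → ℝ) (hrpos : ∀ j, 0 < r j) (hspos : ∀ j, 0 < s j)
    (hr : Tendsto r atTop atTop) (hs : Tendsto s atTop atTop) :
    PGHTendsto (fun j a b => dist a b / r j) x₀ (fun v w => F (v - w)) (0 : Fin n → ℝ) ∧
    PGHTendsto (fun j a b => dist a b / s j) x₀ (fun v w => F (v - w)) (0 : Fin n → ℝ) :=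
  ⟨aux_pgh n x₀ F hF0 hFs hFa K hK π hsurj hcomp r hrpos hr,
   aux_pgh n x₀ F hF0 hFs hFa K hK π hsurj hcomp s hspos hs⟩
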